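/- arXiv:1305.2098 — 2 statements merged into one kernel-verified Lean document; each statement's English description precedes it below -/
import Mathlib

section
/- The relation on the free abelian group P defined by m ≤ m' if and only if m' · m^{-1} lies in the submonoid Q⁺ generated by the elements A_{i,s} is a partial order (reflexive, transitive, and antisymmetric). -/
/-- Monomials of type `C₃`: finitely supported exponent functions on `{1,2,3} × ℤ`. -/
abbrev Mon : Type := (Fin 3 × ℤ) →₀ ℤ

/-- The generator `Y_{i,s}` (index `i : Fin 3` stands for `i+1 ∈ {1,2,3}`). -/
noncomputable def Y (i : Fin 3) (s : ℤ) : Mon := Finsupp.single (i, s) 1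

/-- The elements `A_{i,s}` of type `C₃` (written additively on exponents). -/
noncomputable def A : Fin 3 → ℤ → Mon
  | 0, s => Y 0 (s + 1) + Y 0 (s - 1) - Y 1 s
  | 1, s => Y 1 (s + 1) + Y 1 (s - 1) - Y 0 s - Y 2 s
  | 2, s => Y 2 (s + 2) + Y 2 (s - 2) - Y 1 (s + 1) - Y 1 (s - 1)

/-- Right-negativity. -/
def RightNegative (u : Mon) : Prop :=
  ∀ (i : Fin 3) (s : ℤ), u (i, s) ≠ 0 → (∀ (j : Fin 3) (t : ℤ), s < t → u (j, t) = 0) →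
    u (i, s) < 0

/-- Dominance: all exponents nonnegative. -/
def Dominant (u : Mon) : Prop := ∀ p : Fin 3 × ℤ, 0 ≤ u p

/-- `Q⁺`: the submonoid generated by the `A_{i,s}`. -/
noncomputable def Qplus : AddSubmonoid Mon :=
  AddSubmonoid.closure (Set.range fun p : Fin 3 × ℤ => A p.1 p.2)

/-- The order `m ≤ m'` iff `m' · m⁻¹ ∈ Q⁺` (additively: `m' - m ∈ Q⁺`). -/
def Mle (m m' : Mon) : Prop := m' - m ∈ Qplus

/-- Weights for the positivity functional. -/
def cwt : Fin 3 → ℤ := ![3, 5, 6]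

/-- A linear functional on monomials, weighted by `cwt` on each node. -/
noncomputable def phi : Mon →ₗ[ℤ] ℤ :=
  Finsupp.lsum ℤ fun p : Fin 3 × ℤ => (cwt p.1) • LinearMap.id

lemma phi_Y (i : Fin 3) (s : ℤ) : phi (Y i s) = cwt i := by
  simp [phi, Y, Finsupp.lsum_single]

lemma phi_A_pos (i : Fin 3) (s : ℤ) : 0 < phi (A i s) := by
  fin_cases i <;> simp [A, map_add, map_sub, phi_Y, cwt]

lemma Qplus_phi (x : Mon) (hx : x ∈ Qplus) : 0 ≤ phi x ∧ (phi x = 0 → x = 0) := by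
  refine AddSubmonoid.closure_induction ?_ ?_ ?_ hx
  · rintro y ⟨p, rfl⟩
    have := phi_A_pos p.1 p.2
    exact ⟨le_of_lt this, fun h => absurd h (ne_of_gt this)⟩
  · simp
  · rintro a b _ _ ⟨ha, ha0⟩ ⟨hb, hb0⟩
    refine ⟨by rw [map_add]; omega, fun h => ?_⟩
    rw [map_add] at h
    have h1 : phi a = 0 := by omega
    have h2 : phi b = 0 := by omega
    rw [ha0 h1, hb0 h2, add_zero]

/-- The relation `Mle` is a partial order: reflexive, transitive and antisymmetric. -/
theorem Mle_partialOrder :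
    (∀ m : Mon, Mle m m) ∧
    (∀ a b c : Mon, Mle a b → Mle b c → Mle a c) ∧
    (∀ a b : Mon, Mle a b → Mle b a → a = b) := by
  refine ⟨fun m => ?_, fun a b c hab hbc => ?_, fun a b hab hba => ?_⟩
  · simpa [Mle] using Qplus.zero_mem
  · have := Qplus.add_mem hbc hab
    simpa [Mle, sub_add_sub_cancel] using this
  · obtain ⟨h1, h10⟩ := Qplus_phi _ hab
    obtain ⟨h2, _⟩ := Qplus_phi _ hba
    have : phi (a - b) = -phi (b - a) := by rw [← map_neg, neg_sub]
    have hz : b - a = 0 := h10 (by omega)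
    exact (sub_eq_zero.mp hz).symm
end

section
/- For integers k ≥ 1, m ≥ 1, and s, the monomial n_m = T_{k,0,m-1}^{(s)} · T_{k-1,0,m}^{(s+4)} · (∏_{j=1}^{m-1} A_{1,s+4k+2m+1-2j}^{-1}) · A_{3,s+4k-2}^{-1} A_{2,s+4k}^{-1} A_{1,s+4k+1}^{-1} is dominant (all exponents nonnegative). -/
/-- The highest `l`-weight `T_{k,ℓ,m}^{(s)} = (∏ 3_{s+4i})(∏ 2_{s+4k+2i+1})(∏ 1_{s+4k+2ℓ+2i+2})`.
Here `Y 2`, `Y 1`, `Y 0` stand for the variables with node index `3`, `2`, `1`. -/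
noncomputable def T (k l m : ℕ) (s : ℤ) : Mon :=
  (∑ i ∈ Finset.range k, Y 2 (s + 4 * i)) +
  (∑ i ∈ Finset.range l, Y 1 (s + 4 * k + 2 * i + 1)) +
  (∑ i ∈ Finset.range m, Y 0 (s + 4 * k + 2 * l + 2 * i + 2))

/- Auxiliary lemmas -/

lemma Yc (i : Fin 3) {a b : ℤ} (h : a = b) : Y i a = Y i b := by rw [h]

lemma sumYc (n : ℕ) (i : Fin 3) (f g : ℕ → ℤ) (h : ∀ x < n, f x = g x) :
    ∑ x ∈ Finset.range n, Y i (f x) = ∑ x ∈ Finset.range n, Y i (g x) :=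
  Finset.sum_congr rfl fun x hx => Yc i (h x (Finset.mem_range.mp hx))

lemma sum_Icc_one (n : ℕ) (f : ℕ → Mon) :
    ∑ j ∈ Finset.Icc 1 n, f j = ∑ i ∈ Finset.range n, f (i + 1) := by
  rw [← Finset.Ico_add_one_right_eq_Icc, Finset.sum_Ico_eq_sum_range]
  simp [add_comm]

lemma sum_reflect (n : ℕ) (f g : ℕ → Mon) (h : ∀ i < n, f (n - 1 - i) = g i) :
    ∑ i ∈ Finset.range n, f i = ∑ i ∈ Finset.range n, g i := by
  rw [← Finset.sum_range_reflect f n]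
  exact Finset.sum_congr rfl fun i hi => h i (Finset.mem_range.mp hi)

lemma Y_nonneg (i : Fin 3) (s : ℤ) (p : Fin 3 × ℤ) : 0 ≤ Y i s p := by
  rw [Y, Finsupp.single_apply]
  split <;> norm_num

lemma sumY_nonneg (n : ℕ) (i : Fin 3) (f : ℕ → ℤ) (p : Fin 3 × ℤ) :
    0 ≤ (∑ x ∈ Finset.range n, Y i (f x)) p := by
  rw [Finset.sum_apply']
  exact Finset.sum_nonneg fun x _ => Y_nonneg i (f x) p

/-- The monomial
`n_m = T_{k,0,m-1}^{(s)} T_{k-1,0,m}^{(s+4)} (∏_{j=1}^{m-1} A_{1,s+4k+2m+1-2j}^{-1})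
       A_{3,s+4k-2}^{-1} A_{2,s+4k}^{-1} A_{1,s+4k+1}^{-1}` is dominant. -/
theorem n_m_dominant (k m : ℕ) (hk : 1 ≤ k) (hm : 1 ≤ m) (s : ℤ) :
    Dominant (T k 0 (m - 1) s + T (k - 1) 0 m (s + 4)
      - (∑ j ∈ Finset.Icc 1 (m - 1), A 0 (s + 4 * k + 2 * m + 1 - 2 * j))
      - A 2 (s + 4 * k - 2) - A 1 (s + 4 * k) - A 0 (s + 4 * k + 1)) := by
  obtain ⟨k', rfl⟩ : ∃ k', k = k' + 1 := ⟨k - 1, by omega⟩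
  obtain ⟨m', rfl⟩ : ∃ m', m = m' + 1 := ⟨m - 1, by omega⟩
  simp only [Nat.add_sub_cancel]
  have key : T (k' + 1) 0 m' s + T k' 0 (m' + 1) (s + 4)
      - (∑ j ∈ Finset.Icc 1 m', A 0 (s + 4 * (k' + 1 : ℕ) + 2 * (m' + 1 : ℕ) + 1 - 2 * j))
      - A 2 (s + 4 * (k' + 1 : ℕ) - 2) - A 1 (s + 4 * (k' + 1 : ℕ))
      - A 0 (s + 4 * (k' + 1 : ℕ) + 1)
      = (∑ i ∈ Finset.range k', Y 2 (s + 4 * (i : ℤ)))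
        + (∑ i ∈ Finset.range k', Y 2 (s + 4 + 4 * (i : ℤ)))
        + Y 1 (s + 4 * (k' : ℤ) + 1)
        + ∑ i ∈ Finset.range m', Y 1 (s + 4 * (k' : ℤ) + 2 * (m' : ℤ) + 5 - 2 * (i : ℤ)) := by
    simp only [T, A, Finset.range_zero, Finset.sum_empty, add_zero, Nat.cast_zero, mul_zero]
    rw [sum_Icc_one]
    simp only [A, Finset.sum_sub_distrib, Finset.sum_add_distrib]
    push_cast
    rw [show ∑ i ∈ Finset.range (k' + 1), Y 2 (s + 4 * (i : ℤ))
          = (∑ i ∈ Finset.range k', Y 2 (s + 4 * (i : ℤ))) + Y 2 (s + 4 * (k' : ℤ))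
        from Finset.sum_range_succ _ _]
    rw [show ∑ x ∈ Finset.range m', Y 0 (s + 4 * ((k' : ℤ) + 1) + 2 * (x : ℤ) + 2)
          = ∑ x ∈ Finset.range m', Y 0 (s + 4 * (k' : ℤ) + 2 * (x : ℤ) + 6)
        from sumYc _ _ _ _ fun x _ => by ring]
    rw [show ∑ x ∈ Finset.range (m' + 1), Y 0 (s + 4 + 4 * (k' : ℤ) + 2 * (x : ℤ) + 2)
          = (∑ x ∈ Finset.range m', Y 0 (s + 4 * (k' : ℤ) + 2 * (x : ℤ) + 8))
            + Y 0 (s + 4 * (k' : ℤ) + 6) by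
        rw [Finset.sum_range_succ']
        congr 1
        · exact sumYc _ _ _ _ fun x _ => by push_cast; ring
        · exact Yc _ (by push_cast; ring)]
    rw [show ∑ x ∈ Finset.range m',
            Y 0 (s + 4 * ((k' : ℤ) + 1) + 2 * ((m' : ℤ) + 1) + 1 - 2 * ((x : ℤ) + 1) + 1)
          = ∑ x ∈ Finset.range m', Y 0 (s + 4 * (k' : ℤ) + 2 * (x : ℤ) + 8) by
        apply sum_reflect
        intro x hx
        apply Yc
        have hc : ((m' - 1 - x : ℕ) : ℤ) = (m' : ℤ) - 1 - (x : ℤ) := by omega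
        rw [hc]; ring]
    rw [show ∑ x ∈ Finset.range m',
            Y 0 (s + 4 * ((k' : ℤ) + 1) + 2 * ((m' : ℤ) + 1) + 1 - 2 * ((x : ℤ) + 1) - 1)
          = ∑ x ∈ Finset.range m', Y 0 (s + 4 * (k' : ℤ) + 2 * (x : ℤ) + 6) by
        apply sum_reflect
        intro x hx
        apply Yc
        have hc : ((m' - 1 - x : ℕ) : ℤ) = (m' : ℤ) - 1 - (x : ℤ) := by omega
        rw [hc]; ring]
    rw [show ∑ x ∈ Finset.range m',
            Y 1 (s + 4 * ((k' : ℤ) + 1) + 2 * ((m' : ℤ) + 1) + 1 - 2 * ((x : ℤ) + 1))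
          = ∑ i ∈ Finset.range m', Y 1 (s + 4 * (k' : ℤ) + 2 * (m' : ℤ) + 5 - 2 * (i : ℤ))
        from sumYc _ _ _ _ fun x _ => by ring]
    rw [show Y 2 (s + 4 * ((k' : ℤ) + 1) - 2 + 2) = Y 2 (s + 4 * (k' : ℤ) + 4)
        from Yc _ (by ring)]
    rw [show Y 2 (s + 4 * ((k' : ℤ) + 1) - 2 - 2) = Y 2 (s + 4 * (k' : ℤ))
        from Yc _ (by ring)]
    rw [show Y 2 (s + 4 * ((k' : ℤ) + 1)) = Y 2 (s + 4 * (k' : ℤ) + 4) from Yc _ (by ring)]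
    rw [show Y 1 (s + 4 * ((k' : ℤ) + 1) - 2 + 1) = Y 1 (s + 4 * (k' : ℤ) + 3)
        from Yc _ (by ring)]
    rw [show Y 1 (s + 4 * ((k' : ℤ) + 1) - 2 - 1) = Y 1 (s + 4 * (k' : ℤ) + 1)
        from Yc _ (by ring)]
    rw [show Y 1 (s + 4 * ((k' : ℤ) + 1) + 1) = Y 1 (s + 4 * (k' : ℤ) + 5) from Yc _ (by ring)]
    rw [show Y 1 (s + 4 * ((k' : ℤ) + 1) - 1) = Y 1 (s + 4 * (k' : ℤ) + 3) from Yc _ (by ring)]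
    rw [show Y 0 (s + 4 * ((k' : ℤ) + 1) + 1 + 1) = Y 0 (s + 4 * (k' : ℤ) + 6)
        from Yc _ (by ring)]
    rw [show Y 0 (s + 4 * ((k' : ℤ) + 1) + 1 - 1) = Y 0 (s + 4 * (k' : ℤ) + 4)
        from Yc _ (by ring)]
    rw [show Y 0 (s + 4 * ((k' : ℤ) + 1)) = Y 0 (s + 4 * (k' : ℤ) + 4) from Yc _ (by ring)]
    abel
  rw [key]
  intro p
  simp only [Finsupp.add_apply]
  have := sumY_nonneg k' 2 (fun i => s + 4 * (i : ℤ)) p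
  have := sumY_nonneg k' 2 (fun i => s + 4 + 4 * (i : ℤ)) p
  have := Y_nonneg 1 (s + 4 * (k' : ℤ) + 1) p
  have := sumY_nonneg m' 1 (fun i => s + 4 * (k' : ℤ) + 2 * (m' : ℤ) + 5 - 2 * (i : ℤ)) p
  positivity
end
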